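/- Let u₀ be a nonvanishing solution of Δ(p(n-1)Δu(n-1)) + q(n)u(n) = 0, with p nonvanishing. Define u₁(n) = u₀(n) Σ_{k=0}^{K(n)} λ^k X^{(2k)}(n), where K(n) = n - n₀ - 1 for n > n₀ and K(n) = n₀ - n for n ≤ n₀, and the X^{(2k)} are defined by the recursive indefinite-sum relations from u₀, p, r at base point n₀. Then u₁ solves Δ(p(n-1)Δu(n-1)) + q(n)u(n) = λ r(n) u(n) for all n. -/

import Mathlib

/-- The indefinite sum of `f` vanishing at `n₀`. -/
noncomputable def istar (n₀ : ℤ) (f : ℤ → ℂ) (n : ℤ) : ℂ :=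
  if n₀ ≤ n then ∑ j ∈ Finset.Ico n₀ n, f j else -∑ j ∈ Finset.Ico n n₀, f j

/-- The sequences `X⁽ⁱ⁾`: `X⁽⁰⁾ = 1`, even steps sum `X⁽ⁱ⁻¹⁾(s)/(p(s)u₀(s)u₀(s+1))`,
odd steps sum `u₀(s+1)² X⁽ⁱ⁻¹⁾(s+1) r(s+1)`. -/
noncomputable def Xseq (u₀ p r : ℤ → ℂ) (n₀ : ℤ) : ℕ → ℤ → ℂ
  | 0 => fun _ => 1
  | i + 1 =>
      if (i + 1) % 2 = 0 then
        istar n₀ (fun s => Xseq u₀ p r n₀ i s / (p s * u₀ s * u₀ (s + 1)))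
      else
        istar n₀ (fun s => u₀ (s + 1) ^ 2 * Xseq u₀ p r n₀ i (s + 1) * r (s + 1))

/-- The sequences `Y⁽ⁱ⁾`: `Y⁽⁰⁾ = 1`, with the parity roles exchanged. -/
noncomputable def Yseq (u₀ p r : ℤ → ℂ) (n₀ : ℤ) : ℕ → ℤ → ℂ
  | 0 => fun _ => 1
  | i + 1 =>
      if (i + 1) % 2 = 0 then
        istar n₀ (fun s => u₀ (s + 1) ^ 2 * Yseq u₀ p r n₀ i (s + 1) * r (s + 1))
      else
        istar n₀ (fun s => Yseq u₀ p r n₀ i s / (p s * u₀ s * u₀ (s + 1)))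

lemma istar_succ (n₀ : ℤ) (f : ℤ → ℂ) (n : ℤ) :
    istar n₀ f (n + 1) = istar n₀ f n + f n := by
  unfold istar
  rcases le_or_gt n₀ n with h | h
  · rw [if_pos h, if_pos (by omega : n₀ ≤ n + 1),
      show Finset.Ico n₀ (n+1) = insert n (Finset.Ico n₀ n) by
        ext x; simp only [Finset.mem_Ico, Finset.mem_insert]; omega,
      Finset.sum_insert (by simp)]
    ring
  · rcases eq_or_lt_of_le (by omega : n + 1 ≤ n₀) with h2 | h2
    · rw [if_pos (by omega), if_neg (by omega), ← h2,
        show Finset.Ico n (n+1) = {n} by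
          ext x; simp only [Finset.mem_Ico, Finset.mem_singleton]; omega]
      simp
    · rw [if_neg (by omega), if_neg (by omega),
        show Finset.Ico n n₀ = insert n (Finset.Ico (n+1) n₀) by
          ext x; simp only [Finset.mem_Ico, Finset.mem_insert]; omega,
        Finset.sum_insert (by simp)]
      ring

lemma istar_base (n₀ : ℤ) (f : ℤ → ℂ) : istar n₀ f n₀ = 0 := by
  simp [istar]

lemma istar_eq_zero (n₀ : ℤ) (f : ℤ → ℂ) (n : ℤ)
    (h : ∀ s, min n n₀ ≤ s → s < max n₀ n → f s = 0) : istar n₀ f n = 0 := by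
  unfold istar
  split_ifs with h1
  · exact Finset.sum_eq_zero fun s hs => by
      simp only [Finset.mem_Ico] at hs; exact h s (by omega) (by omega)
  · rw [Finset.sum_eq_zero fun s hs => by
      simp only [Finset.mem_Ico] at hs; exact h s (by omega) (by omega)]
    ring

lemma Xseq_odd (u₀ p r : ℤ → ℂ) (n₀ : ℤ) (k : ℕ) :
    Xseq u₀ p r n₀ (2 * k + 1) =
      istar n₀ (fun s => u₀ (s + 1) ^ 2 * Xseq u₀ p r n₀ (2 * k) (s + 1) * r (s + 1)) := by
  rw [Xseq, if_neg (by omega)]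

lemma Xseq_even (u₀ p r : ℤ → ℂ) (n₀ : ℤ) (k : ℕ) :
    Xseq u₀ p r n₀ (2 * k + 2) =
      istar n₀ (fun s => Xseq u₀ p r n₀ (2 * k + 1) s / (p s * u₀ s * u₀ (s + 1))) := by
  rw [show 2 * k + 2 = (2 * k + 1) + 1 from rfl, Xseq, if_pos (by omega)]

lemma Xvanish (u₀ p r : ℤ → ℂ) (n₀ : ℤ) : ∀ k : ℕ,
    (∀ n : ℤ, n₀ - k ≤ n → n ≤ n₀ + k → Xseq u₀ p r n₀ (2 * k + 1) n = 0) ∧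
    (∀ n : ℤ, n₀ - k ≤ n → n ≤ n₀ + k + 1 → Xseq u₀ p r n₀ (2 * k + 2) n = 0) := by
  intro k
  induction k with
  | zero =>
    constructor
    · intro n h1 h2
      have : n = n₀ := by omega
      subst this
      rw [Xseq_odd]; exact istar_base _ _
    · intro n h1 h2
      rw [Xseq_even]
      apply istar_eq_zero
      intro s hs1 hs2
      have : s = n₀ := by omega
      subst this
      rw [Xseq_odd, istar_base]
      simp
  | succ k ih =>
    have hodd : ∀ n : ℤ, n₀ - (k+1 : ℕ) ≤ n → n ≤ n₀ + (k+1 : ℕ) →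
        Xseq u₀ p r n₀ (2 * (k+1) + 1) n = 0 := by
      intro n h1 h2
      rw [Xseq_odd]
      apply istar_eq_zero
      intro s hs1 hs2
      have : Xseq u₀ p r n₀ (2 * k + 2) (s + 1) = 0 := by
        apply ih.2 (s+1) (by push_cast at h1 h2 ⊢; omega) (by push_cast at h1 h2 ⊢; omega)
      rw [show 2 * (k+1) = 2 * k + 2 by ring, this]
      ring
    refine ⟨hodd, ?_⟩
    intro n h1 h2
    rw [show 2 * (k+1) + 2 = 2 * (k+1) + 1 + 1 from rfl,
      show (2 : ℕ) * (k+1) + 1 + 1 = 2 * (k+1) + 2 from rfl, Xseq_even]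
    apply istar_eq_zero
    intro s hs1 hs2
    rw [hodd s (by push_cast at h1 h2 ⊢; omega) (by push_cast at h1 h2 ⊢; omega)]
    simp

lemma alg {P P' Q R U U' U'' a b c : ℂ}
    (hP : P ≠ 0) (hP' : P' ≠ 0) (hU : U ≠ 0) (hU' : U' ≠ 0) (hU'' : U'' ≠ 0)
    (hs : P * (U'' - U) - P' * (U - U') + Q * U = 0) :
    P * (U'' * (a + b / (P' * U' * U) + (b + U ^ 2 * c * R) / (P * U * U''))
        - U * (a + b / (P' * U' * U)))
      - P' * (U * (a + b / (P' * U' * U)) - U' * a)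
      + Q * (U * (a + b / (P' * U' * U)))
    = R * (U * c) := by
  obtain ⟨B, hB⟩ : ∃ B, b = B * (P' * U' * U) ∧ b / (P' * U' * U) = B :=
    ⟨b / (P' * U' * U), by field_simp, rfl⟩
  obtain ⟨C, hC⟩ : ∃ C, b + U ^ 2 * c * R = C * (P * U * U'') ∧
      (b + U ^ 2 * c * R) / (P * U * U'') = C :=
    ⟨(b + U ^ 2 * c * R) / (P * U * U''), by field_simp, rfl⟩
  rw [hB.2, hC.2]
  apply mul_left_cancel₀ hU
  linear_combination (a + B) * U * hs - hC.1 + hB.1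

lemma Lv (u₀ p q r : ℤ → ℂ) (n₀ : ℤ)
    (hp : ∀ n, p n ≠ 0) (hu₀ : ∀ n, u₀ n ≠ 0)
    (hsol : ∀ n : ℤ,
      p n * (u₀ (n + 1) - u₀ n) - p (n - 1) * (u₀ n - u₀ (n - 1)) + q n * u₀ n = 0)
    (k : ℕ) (n : ℤ) :
    p n * (u₀ (n+1) * Xseq u₀ p r n₀ (2*k+2) (n+1) - u₀ n * Xseq u₀ p r n₀ (2*k+2) n)
      - p (n-1) * (u₀ n * Xseq u₀ p r n₀ (2*k+2) n
          - u₀ (n-1) * Xseq u₀ p r n₀ (2*k+2) (n-1))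
      + q n * (u₀ n * Xseq u₀ p r n₀ (2*k+2) n)
    = r n * (u₀ n * Xseq u₀ p r n₀ (2*k) n) := by
  have hn : n - 1 + 1 = n := by ring
  have h1 := istar_succ n₀
    (fun s => Xseq u₀ p r n₀ (2*k+1) s / (p s * u₀ s * u₀ (s+1))) n
  have h2 := istar_succ n₀
    (fun s => Xseq u₀ p r n₀ (2*k+1) s / (p s * u₀ s * u₀ (s+1))) (n-1)
  have h3 := istar_succ n₀
    (fun s => u₀ (s+1)^2 * Xseq u₀ p r n₀ (2*k) (s+1) * r (s+1)) (n-1)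
  rw [hn] at h2 h3
  rw [Xseq_even u₀ p r n₀ k, h1, h2, Xseq_odd u₀ p r n₀ k, h3]
  exact alg (hp n) (hp (n-1)) (hu₀ n) (hu₀ (n-1)) (hu₀ (n+1)) (hsol n)

lemma sum_ext (u₀ p r : ℤ → ℂ) (n₀ : ℤ) (lam : ℂ) (m : ℤ) (M : ℕ)
    (hM : (if n₀ < m then (m - n₀).toNat else (n₀ - m).toNat + 1) ≤ M) :
    ∑ k ∈ Finset.range (if n₀ < m then (m - n₀).toNat else (n₀ - m).toNat + 1),
        lam ^ k * Xseq u₀ p r n₀ (2 * k) m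
      = ∑ k ∈ Finset.range M, lam ^ k * Xseq u₀ p r n₀ (2 * k) m := by
  apply Finset.sum_subset (Finset.range_subset_range.2 hM)
  intro k _ hnk
  simp only [Finset.mem_range, not_lt] at hnk
  by_cases h : n₀ < m
  · rw [if_pos h] at hnk
    obtain ⟨j, rfl⟩ : ∃ j, k = j + 1 := ⟨k - 1, by omega⟩
    rw [show 2 * (j + 1) = 2 * j + 2 by ring,
      (Xvanish u₀ p r n₀ j).2 m (by omega) (by omega)]
    ring
  · rw [if_neg h] at hnk
    obtain ⟨j, rfl⟩ : ∃ j, k = j + 1 := ⟨k - 1, by omega⟩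
    rw [show 2 * (j + 1) = 2 * j + 2 by ring,
      (Xvanish u₀ p r n₀ j).2 m (by omega) (by omega)]
    ring


/-- Theorem 2, first solution: `u₁(n) = u₀(n) Σ_{k=0}^{K(n)} λᵏ X⁽²ᵏ⁾(n)` solves the
Jacobi equation with spectral parameter `λ`. -/
theorem u1_solves (u₀ p q r u₁ : ℤ → ℂ) (n₀ : ℤ) (lam : ℂ)
    (hp : ∀ n, p n ≠ 0) (hu₀ : ∀ n, u₀ n ≠ 0)
    (hsol : ∀ n : ℤ,
      p n * (u₀ (n + 1) - u₀ n) - p (n - 1) * (u₀ n - u₀ (n - 1)) + q n * u₀ n = 0)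
    (hu₁ : ∀ n : ℤ, u₁ n = u₀ n *
        ∑ k ∈ Finset.range (if n₀ < n then (n - n₀).toNat else (n₀ - n).toNat + 1),
          lam ^ k * Xseq u₀ p r n₀ (2 * k) n) :
    ∀ n : ℤ,
      p n * (u₁ (n + 1) - u₁ n) - p (n - 1) * (u₁ n - u₁ (n - 1)) + q n * u₁ n
        = lam * r n * u₁ n := by
  intro n
  set M' : ℕ := (n - n₀).natAbs + 1 with hM'
  have ep : u₁ (n + 1) = u₀ (n + 1) *
      ∑ k ∈ Finset.range (M' + 1), lam ^ k * Xseq u₀ p r n₀ (2 * k) (n + 1) := by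
    rw [hu₁ (n + 1), sum_ext u₀ p r n₀ lam (n + 1) (M' + 1)
      (by split_ifs <;> omega)]
  have e0 : u₁ n = u₀ n *
      ∑ k ∈ Finset.range (M' + 1), lam ^ k * Xseq u₀ p r n₀ (2 * k) n := by
    rw [hu₁ n, sum_ext u₀ p r n₀ lam n (M' + 1) (by split_ifs <;> omega)]
  have em : u₁ (n - 1) = u₀ (n - 1) *
      ∑ k ∈ Finset.range (M' + 1), lam ^ k * Xseq u₀ p r n₀ (2 * k) (n - 1) := by
    rw [hu₁ (n - 1), sum_ext u₀ p r n₀ lam (n - 1) (M' + 1) (by split_ifs <;> omega)]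
  rw [ep, e0, em]
  have expand :
      p n * (u₀ (n + 1) * ∑ k ∈ Finset.range (M' + 1), lam ^ k * Xseq u₀ p r n₀ (2 * k) (n + 1)
          - u₀ n * ∑ k ∈ Finset.range (M' + 1), lam ^ k * Xseq u₀ p r n₀ (2 * k) n)
        - p (n - 1) * (u₀ n * ∑ k ∈ Finset.range (M' + 1), lam ^ k * Xseq u₀ p r n₀ (2 * k) n
          - u₀ (n - 1) * ∑ k ∈ Finset.range (M' + 1), lam ^ k * Xseq u₀ p r n₀ (2 * k) (n - 1))
        + q n * (u₀ n * ∑ k ∈ Finset.range (M' + 1), lam ^ k * Xseq u₀ p r n₀ (2 * k) n)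
      = ∑ k ∈ Finset.range (M' + 1), lam ^ k *
          (p n * (u₀ (n + 1) * Xseq u₀ p r n₀ (2 * k) (n + 1) - u₀ n * Xseq u₀ p r n₀ (2 * k) n)
            - p (n - 1) * (u₀ n * Xseq u₀ p r n₀ (2 * k) n
                - u₀ (n - 1) * Xseq u₀ p r n₀ (2 * k) (n - 1))
            + q n * (u₀ n * Xseq u₀ p r n₀ (2 * k) n)) := by
    simp only [Finset.mul_sum, mul_sub, ← Finset.sum_sub_distrib, ← Finset.sum_add_distrib]
    apply Finset.sum_congr rfl
    intros
    ring
  rw [expand, Finset.sum_range_succ']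
  have f0 : lam ^ 0 *
      (p n * (u₀ (n + 1) * Xseq u₀ p r n₀ (2 * 0) (n + 1) - u₀ n * Xseq u₀ p r n₀ (2 * 0) n)
        - p (n - 1) * (u₀ n * Xseq u₀ p r n₀ (2 * 0) n
            - u₀ (n - 1) * Xseq u₀ p r n₀ (2 * 0) (n - 1))
        + q n * (u₀ n * Xseq u₀ p r n₀ (2 * 0) n)) = 0 := by
    show lam ^ 0 * (p n * (u₀ (n + 1) * 1 - u₀ n * 1)
      - p (n - 1) * (u₀ n * 1 - u₀ (n - 1) * 1) + q n * (u₀ n * 1)) = 0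
    simp only [mul_one, pow_zero, one_mul]
    linear_combination hsol n
  rw [f0, add_zero]
  have step : ∀ k ∈ Finset.range M', lam ^ (k + 1) *
      (p n * (u₀ (n + 1) * Xseq u₀ p r n₀ (2 * (k + 1)) (n + 1)
          - u₀ n * Xseq u₀ p r n₀ (2 * (k + 1)) n)
        - p (n - 1) * (u₀ n * Xseq u₀ p r n₀ (2 * (k + 1)) n
            - u₀ (n - 1) * Xseq u₀ p r n₀ (2 * (k + 1)) (n - 1))
        + q n * (u₀ n * Xseq u₀ p r n₀ (2 * (k + 1)) n))
      = lam ^ (k + 1) * (r n * (u₀ n * Xseq u₀ p r n₀ (2 * k) n)) := by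
    intro k _
    rw [show 2 * (k + 1) = 2 * k + 2 by ring, Lv u₀ p q r n₀ hp hu₀ hsol k n]
  rw [Finset.sum_congr rfl step]
  have hz : Xseq u₀ p r n₀ (2 * M') n = 0 := by
    rw [hM', show 2 * ((n - n₀).natAbs + 1) = 2 * (n - n₀).natAbs + 2 by ring]
    exact (Xvanish u₀ p r n₀ (n - n₀).natAbs).2 n (by omega) (by omega)
  conv_rhs => rw [Finset.sum_range_succ]
  rw [hz, mul_zero, add_zero, Finset.mul_sum, Finset.mul_sum]
  apply Finset.sum_congr rfl
  intros
  ring
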